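/- The finitary language L = {cⁿ a r^{n−2} | n ≥ 2} over the visibly pushdown alphabet with c a call, r a return, and a an internal action, is not accepted by any deterministic visibly one-counter automaton (DV1CA). -/

import Mathlib

/-!  Common definitions: pushdown machines, ω-pushdown automata, pushdown games,
pushdown strategies (deterministic pushdown automata with output), and
alternating two-way / nondeterministic one-way parity tree automata. -/

/-- Kinds of letters in a visibly pushdown alphabet. -/
inductive VKind : Type
  | call | ret | intern

/-- A pushdown machine over states `Q`, input alphabet `A` and stack alphabet `Γ`.
The initial stack symbol `⊥` is implicit: a stack content `γ⊥ ∈ Γ*⊥` is modeled by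
the list `γ` of symbols above `⊥`, and the top-of-stack argument `none` of the
transition function represents `⊥` (i.e. the empty list).  A transition replaces the
topmost symbol by the returned word (respectively pushes the returned word on top of
`⊥`), so `⊥` can neither be pushed onto nor removed from the stack.  The input
letter `none` is `ε`. -/
structure PDM (Q A Γ : Type) where
  δ : Q → Option A → Option Γ → Set (Q × List Γ)
  qin : Q

namespace PDM

variable {Q A Γ : Type}

/-- A configuration: a state together with the stack content (above `⊥`). -/
abbrev Conf (Q Γ : Type) : Type := Q × List Γ

/-- Stack height of a configuration `(q,γ⊥)`: the length `|γ⊥|` (the `⊥` counts). -/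
def sh (c : Conf Q Γ) : ℕ := c.2.length + 1

/-- One transition step of the machine, labeled by `none` (an `ε`-move) or `some a`. -/
def Step (M : PDM Q A Γ) (c : Conf Q Γ) (a : Option A) (c' : Conf Q Γ) : Prop :=
  match c.2 with
  | [] => c' ∈ M.δ c.1 a none
  | t :: rest => ∃ γ' : List Γ, (c'.1, γ') ∈ M.δ c.1 a (some t) ∧ c'.2 = γ' ++ rest

/-- Determinism: `|δ(q,a,A)| + |δ(q,ε,A)| ≤ 1` for all `q ∈ Q`, `a ∈ A`, `A ∈ Γ⊥`. -/
def Deterministic (M : PDM Q A Γ) : Prop :=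
  ∀ (q : Q) (t : Option Γ),
    (∀ a : Option A, (M.δ q a t).Subsingleton) ∧
    (∀ a : A, (M.δ q (some a) t).Nonempty → M.δ q none t = ∅)

/-- A realtime machine has no `ε`-transitions. -/
def Realtime (M : PDM Q A Γ) : Prop := ∀ q t, M.δ q none t = ∅

/-- Normal form: every transition is a push of exactly one symbol (`δ(q,a,A)=(q',A'A)`),
a skip (`δ(q,a,A)=(q',A)`), or a pop (`δ(q,a,A)=(q',ε)`). -/
def NormalForm (M : PDM Q A Γ) : Prop :=
  ∀ q a t p, p ∈ M.δ q a t →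
    p.2 = ([] : List Γ) ∨ p.2 = t.toList ∨ ∃ B : Γ, p.2 = B :: t.toList

/-- A blind one-counter machine: every transition enabled with empty stack (counter `0`)
is also enabled, with the same state change and counter effect, with nonempty stack:
`δ(q,a,⊥) ∋ (q',Aⁿ⊥)` implies `δ(q,a,A) ∋ (q',AⁿA)`. -/
def Blind (M : PDM Q A Unit) : Prop :=
  ∀ (q : Q) (a : Option A) (p : Q × List Unit),
    p ∈ M.δ q a none → (p.1, p.2 ++ [()]) ∈ M.δ q a (some ())

/-- A visibly pushdown machine w.r.t. the partition `kind` of the input alphabet into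
calls, returns and internal actions: no `ε`-transitions; on a call exactly one symbol is
pushed and the transition does not depend on the top of the stack; on a return the top
symbol is popped (`⊥` is left unchanged); on an internal action the stack is unchanged
and the transition does not depend on the top of the stack. -/
def Visibly (M : PDM Q A Γ) (kind : A → VKind) : Prop :=
  (∀ q t, M.δ q none t = ∅) ∧
  (∀ q a, kind a = VKind.call → ∃ mv : Set (Q × Γ),
      ∀ t, M.δ q (some a) t = (fun p : Q × Γ => (p.1, p.2 :: t.toList)) '' mv) ∧
  (∀ q a t, kind a = VKind.ret → ∀ p ∈ M.δ q (some a) t, p.2 = ([] : List Γ)) ∧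
  (∀ q a, kind a = VKind.intern → ∃ mv : Set Q,
      ∀ t, M.δ q (some a) t = (fun q' : Q => (q', t.toList)) '' mv)

/-- `ρ` is an infinite run of `M` on the ω-word `α`: it starts in the initial
configuration `(q_in,⊥)`, each step follows `δ` on a letter or on `ε`, and the
consumed letters (the non-`ε` labels, in order) form exactly `α`. -/
def IsRunOn (M : PDM Q A Γ) (ρ : ℕ → Conf Q Γ) (α : ℕ → A) : Prop :=
  ρ 0 = (M.qin, []) ∧
  ∃ u : ℕ → Option A,
    (∀ n : ℕ, M.Step (ρ n) (u n) (ρ (n + 1))) ∧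
    ∃ φ : ℕ → ℕ, StrictMono φ ∧ (∀ k : ℕ, u (φ k) = some (α k)) ∧
      ∀ n : ℕ, (u n).isSome = true → ∃ k : ℕ, φ k = n

/-- `Inf(ρ)`: states occurring infinitely often in `ρ`. -/
def InfOcc (ρ : ℕ → Conf Q Γ) : Set Q := {q | ∀ n : ℕ, ∃ m, n ≤ m ∧ (ρ m).1 = q}

/-- `Steps_ρ = {n | ∀ m ≥ n, sh(ρ(m)) ≥ sh(ρ(n))}`. -/
def StepsSet (ρ : ℕ → Conf Q Γ) : Set ℕ := {n | ∀ m : ℕ, n ≤ m → sh (ρ n) ≤ sh (ρ m)}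

/-- States occurring infinitely often in the subsequence `ρ|_{Steps_ρ}`. -/
def InfOccStair (ρ : ℕ → Conf Q Γ) : Set Q :=
  {q | ∀ n : ℕ, ∃ m, n ≤ m ∧ m ∈ StepsSet ρ ∧ (ρ m).1 = q}

/-- Parity condition: the minimal priority seen infinitely often is even. -/
def ParityAcc (col : Q → ℕ) (ρ : ℕ → Conf Q Γ) : Prop :=
  Even (sInf (col '' InfOcc ρ))

/-- Stair parity condition: the minimal priority seen infinitely often in
`ρ|_{Steps_ρ}` is even. -/
def StairParityAcc (col : Q → ℕ) (ρ : ℕ → Conf Q Γ) : Prop :=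
  Even (sInf (col '' InfOccStair ρ))

/-- The ω-language of the parity pushdown automaton `(M, col)`. -/
def ParityLang (M : PDM Q A Γ) (col : Q → ℕ) : Set (ℕ → A) :=
  {α | ∃ ρ : ℕ → Conf Q Γ, M.IsRunOn ρ α ∧ ParityAcc col ρ}

/-- The ω-language of the stair parity pushdown automaton `(M, col)`. -/
def StairParityLang (M : PDM Q A Γ) (col : Q → ℕ) : Set (ℕ → A) :=
  {α | ∃ ρ : ℕ → Conf Q Γ, M.IsRunOn ρ α ∧ StairParityAcc col ρ}

/-- Acceptance of a finite word by the pushdown automaton `(M, F)`: some finite run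
from the initial configuration consuming exactly `w` ends in a final state. -/
def AcceptsFin (M : PDM Q A Γ) (F : Set Q) (w : List A) : Prop :=
  ∃ (m : ℕ) (ρ : ℕ → Conf Q Γ) (u : ℕ → Option A),
    ρ 0 = (M.qin, []) ∧ (∀ k < m, M.Step (ρ k) (u k) (ρ (k + 1))) ∧
    (List.ofFn (fun k : Fin m => u k.1)).reduceOption = w ∧ (ρ m).1 ∈ F

/-- An infinite play of the pushdown game: a sequence of configurations starting in the
initial configuration, together with the labels of the chosen transitions. -/
def IsPlay (M : PDM Q A Γ) (conf : ℕ → Conf Q Γ) (lab : ℕ → Option A) : Prop :=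
  conf 0 = (M.qin, []) ∧ ∀ n : ℕ, M.Step (conf n) (lab n) (conf (n + 1))

/-- Player `i` has a winning strategy (as an abstract function from histories of moves
to moves) in the pushdown game on `M` given by the partition `owner` of the states,
where Player 0 wins an infinite play `conf` iff `W conf` holds: the strategy always
proposes an enabled transition at any reachable consistent position owned by Player `i`,
and every infinite play consistent with it is won by Player `i`. -/
def HasAbstractWinning (M : PDM Q A Γ) (owner : Q → Fin 2)
    (W : (ℕ → Conf Q Γ) → Prop) (i : Fin 2) : Prop :=
  ∃ σ : List (Option A) → Option A,
    (∀ (n : ℕ) (conf : ℕ → Conf Q Γ) (lab : ℕ → Option A),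
      conf 0 = (M.qin, []) →
      (∀ k < n, M.Step (conf k) (lab k) (conf (k + 1))) →
      (∀ k < n, owner (conf k).1 = i → lab k = σ (List.ofFn (fun j : Fin k => lab j.1))) →
      owner (conf n).1 = i →
      ∃ c' : Conf Q Γ, M.Step (conf n) (σ (List.ofFn (fun j : Fin n => lab j.1))) c') ∧
    (∀ (conf : ℕ → Conf Q Γ) (lab : ℕ → Option A),
      IsPlay M conf lab →
      (∀ n : ℕ, owner (conf n).1 = i → lab n = σ (List.ofFn (fun j : Fin n => lab j.1))) →
      (W conf ↔ i = 0))

/-- The pushdown game on `M` with partition `owner` and winning condition `W`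
(for Player 0) is determined. -/
def Determined (M : PDM Q A Γ) (owner : Q → Fin 2)
    (W : (ℕ → Conf Q Γ) → Prop) : Prop :=
  ∃ i : Fin 2, HasAbstractWinning M owner W i

end PDM

/-- A deterministic pushdown automaton with output (a pushdown strategy): it reads the
opponent's moves and outputs the player's own next choices.  `δ s inp t = some (s', γ', out)`
means: in state `s` with top of stack `t` (`none` = `⊥`), on input `inp` (`none` = `ε`)
the machine moves to state `s'`, replaces the top of the stack by `γ'` and outputs `out`
(`none` = `ε`-output).  Partiality of `δ` gives determinism per input letter. -/
structure StratPDA (A Γ' : Type) where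
  S : Type
  sin : S
  δ : S → Option A → Option Γ' → Option (S × List Γ' × Option A)

namespace StratPDA

variable {Q A Γ Γ' : Type}

/-- Determinism: if an `ε`-input transition is present then no letter transition is. -/
def Det (T : StratPDA A Γ') : Prop :=
  ∀ (s : T.S) (t : Option Γ'),
    (T.δ s none t).isSome = true → ∀ a : A, T.δ s (some a) t = none

/-- One step of the strategy transducer (same stack convention as for `PDM`). -/
def TStep (T : StratPDA A Γ') (c : T.S × List Γ') (inp out : Option A)
    (c' : T.S × List Γ') : Prop :=
  match c.2 with
  | [] => T.δ c.1 inp none = some (c'.1, c'.2, out)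
  | t :: rest => ∃ γ' : List Γ',
      T.δ c.1 inp (some t) = some (c'.1, γ', out) ∧ c'.2 = γ' ++ rest

/-- A blind one-counter strategy transducer: every transition enabled with counter `0`
is also enabled, with the same effect, with nonzero counter. -/
def Blind (T : StratPDA A Unit) : Prop :=
  ∀ (s : T.S) (inp : Option A) (r : T.S × List Unit × Option A),
    T.δ s inp none = some r → T.δ s inp (some ()) = some (r.1, r.2.1 ++ [()], r.2.2)

/-- A realtime strategy transducer: no transition both reads `ε` and outputs `ε`
(every transition carries a letter, either read or written). -/
def Realtime (T : StratPDA A Γ') : Prop :=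
  ∀ (s : T.S) (t : Option Γ') (r : T.S × List Γ' × Option A),
    T.δ s none t = some r → r.2.2 ≠ none

/-- Stack discipline of a visibly pushdown machine for the letter `a`. -/
def VStk (kind : A → VKind) (a : A) (t : Option Γ') (γ' : List Γ') : Prop :=
  match kind a with
  | VKind.call => ∃ B : Γ', γ' = B :: t.toList
  | VKind.ret => γ' = ([] : List Γ')
  | VKind.intern => γ' = t.toList

/-- A visibly pushdown strategy transducer: every transition carries exactly one letter
(the letter read on input transitions, the letter written on output transitions) and the
stack is used according to the kind of that letter. -/
def Visibly (T : StratPDA A Γ') (kind : A → VKind) : Prop :=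
  (∀ (s : T.S) (a : A) (t : Option Γ') (s' : T.S) (γ' : List Γ') (out : Option A),
      T.δ s (some a) t = some (s', γ', out) → out = none ∧ VStk kind a t γ') ∧
  (∀ (s : T.S) (t : Option Γ') (s' : T.S) (γ' : List Γ') (out : Option A),
      T.δ s none t = some (s', γ', out) → ∃ a : A, out = some a ∧ VStk kind a t γ')

/-- The strategy transducer `T`, playing for Player `i`, is consistent with the play
`(conf, lab)` of the pushdown game on `M`: `T` runs in lockstep with the play, reading
the opponent's moves and outputting Player `i`'s moves. -/
def Consistent (T : StratPDA A Γ') (M : PDM Q A Γ) (owner : Q → Fin 2) (i : Fin 2)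
    (conf : ℕ → PDM.Conf Q Γ) (lab : ℕ → Option A)
    (τ : ℕ → T.S × List Γ') : Prop :=
  τ 0 = (T.sin, []) ∧
  ∀ n : ℕ, T.TStep (τ n) (if owner (conf n).1 = i then none else lab n)
      (if owner (conf n).1 = i then lab n else none) (τ (n + 1))

/-- `T` realizes a winning strategy for Player `i` in the pushdown game on `M` with
partition `owner`, where Player 0 wins an infinite play `conf` iff `W conf` holds:
`T` is deterministic; along every finite `T`-consistent play prefix `T` proposes an
enabled move at positions of Player `i` and can process every enabled move of the
opponent; and every infinite play consistent with `T` is won by Player `i`. -/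
def IsWinningStrat (T : StratPDA A Γ') (M : PDM Q A Γ) (owner : Q → Fin 2)
    (W : (ℕ → PDM.Conf Q Γ) → Prop) (i : Fin 2) : Prop :=
  T.Det ∧
  (∀ (n : ℕ) (conf : ℕ → PDM.Conf Q Γ) (lab : ℕ → Option A) (τ : ℕ → T.S × List Γ'),
    conf 0 = (M.qin, []) → τ 0 = (T.sin, []) →
    (∀ k < n, M.Step (conf k) (lab k) (conf (k + 1))) →
    (∀ k < n, T.TStep (τ k) (if owner (conf k).1 = i then none else lab k)
        (if owner (conf k).1 = i then lab k else none) (τ (k + 1))) →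
    ((owner (conf n).1 = i →
        ∃ (x : Option A) (c' : PDM.Conf Q Γ) (τ' : T.S × List Γ'),
          M.Step (conf n) x c' ∧ T.TStep (τ n) none x τ') ∧
     (owner (conf n).1 ≠ i →
        ∀ (x : Option A) (c' : PDM.Conf Q Γ), M.Step (conf n) x c' →
          ∃ τ' : T.S × List Γ', T.TStep (τ n) x none τ'))) ∧
  (∀ (conf : ℕ → PDM.Conf Q Γ) (lab : ℕ → Option A) (τ : ℕ → T.S × List Γ'),
    PDM.IsPlay M conf lab → T.Consistent M owner i conf lab τ → (W conf ↔ i = 0))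

end StratPDA

/-! Tree automata. -/

/-- Positive Boolean formulas over `X` (with `true` and `false`). -/
inductive PosBool (X : Type) : Type
  | tru | fls
  | var (x : X)
  | and (f g : PosBool X)
  | or (f g : PosBool X)

/-- Satisfaction of a positive Boolean formula by a set of variables. -/
def PosBool.Sat {X : Type} : PosBool X → Set X → Prop
  | .tru, _ => True
  | .fls, _ => False
  | .var x, Y => x ∈ Y
  | .and f g, Y => f.Sat Y ∧ g.Sat Y
  | .or f g, Y => f.Sat Y ∨ g.Sat Y

/-- Navigation directions in a `Γ`-tree: up (to the parent), stay, or down to child `A`.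
Nodes of the full `Γ`-tree are lists over `Γ` with the last chosen direction at the head,
so the child `γ.↓_A` is `A :: γ` and the parent of `A :: γ` is `γ`. -/
inductive TMove (Γ : Type) : Type
  | up | stay
  | down (A : Γ)

def TMove.apply {Γ : Type} : TMove Γ → List Γ → Option (List Γ)
  | .up, [] => none
  | .up, _ :: l => some l
  | .stay, l => some l
  | .down A, l => some (A :: l)

/-- An alternating two-way parity tree automaton over `Sig`-labeled full `Γ`-trees. -/
structure A2TA (Sig Γ : Type) where
  Q : Type
  qin : Q
  δ : Q → Sig → PosBool (TMove Γ × Q)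
  col : Q → ℕ

/-- A run of the A2TA `B` on the `Sig`-labeled full `Γ`-tree `lab`: a tree (over some
branching type `Ξ`, children obtained by consing) whose nodes are labeled by pairs
(state, tree node), rooted at `(q_in, ε)`, such that the successors of every node
satisfy the transition formula. -/
structure A2Run {Sig Γ : Type} (B : A2TA Sig Γ) (lab : List Γ → Sig) where
  Ξ : Type
  tree : Set (List Ξ)
  rlab : List Ξ → B.Q × List Γ
  root_mem : [] ∈ tree
  root_lab : rlab [] = (B.qin, [])
  closed : ∀ (ξ : Ξ) (l : List Ξ), ξ :: l ∈ tree → l ∈ tree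
  trans : ∀ l ∈ tree, ∃ S : Set (TMove Γ × B.Q),
    PosBool.Sat (B.δ (rlab l).1 (lab (rlab l).2)) S ∧
    ∀ dq ∈ S, ∃ γ' : List Γ, TMove.apply dq.1 (rlab l).2 = some γ' ∧
      ∃ ξ : Ξ, ξ :: l ∈ tree ∧ rlab (ξ :: l) = (dq.2, γ')

/-- An infinite path of a run, starting at the root. -/
def A2Run.IsPath {Sig Γ : Type} {B : A2TA Sig Γ} {lab : List Γ → Sig}
    (r : A2Run B lab) (π : ℕ → List r.Ξ) : Prop :=
  π 0 = [] ∧ ∀ n : ℕ, (∃ ξ : r.Ξ, π (n + 1) = ξ :: π n) ∧ π (n + 1) ∈ r.tree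

/-- `B` accepts `lab`: some run is accepting, i.e. on every infinite path the minimal
priority seen infinitely often is even. -/
def A2TA.Accepts {Sig Γ : Type} (B : A2TA Sig Γ) (lab : List Γ → Sig) : Prop :=
  ∃ r : A2Run B lab, ∀ π : ℕ → List r.Ξ, r.IsPath π →
    Even (sInf (B.col '' {q | ∀ n : ℕ, ∃ m, n ≤ m ∧ (r.rlab (π m)).1 = q}))

/-- Stair acceptance for an automaton with the same components (a StA2TA): on every
infinite path the minimal priority seen infinitely often at the `Steps` positions
(positions whose stack/tree-node height is never exceeded from below later) is even. -/
def A2TA.StairAccepts {Sig Γ : Type} (B : A2TA Sig Γ) (lab : List Γ → Sig) : Prop :=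
  ∃ r : A2Run B lab, ∀ π : ℕ → List r.Ξ, r.IsPath π →
    Even (sInf (B.col '' {q | ∀ n : ℕ, ∃ m, n ≤ m ∧
      (∀ m' : ℕ, m ≤ m' → (r.rlab (π m)).2.length ≤ (r.rlab (π m')).2.length) ∧
      (r.rlab (π m)).1 = q}))

/-- A nondeterministic one-way parity tree automaton over `Sig`-labeled full `Γ`-trees. -/
structure N1TA (Sig Γ : Type) where
  Q : Type
  qin : Q
  Δ : Q → Sig → Set (Γ → Q)
  col : Q → ℕ

/-- Acceptance for N1TA: some run (one state per node, top-down) is such that along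
every branch the minimal priority seen infinitely often is even. -/
def N1TA.Accepts {Sig Γ : Type} (E : N1TA Sig Γ) (lab : List Γ → Sig) : Prop :=
  ∃ r : List Γ → E.Q, r [] = E.qin ∧
    (∀ l : List Γ, ∃ f ∈ E.Δ (r l) (lab l), ∀ A : Γ, r (A :: l) = f A) ∧
    ∀ β : ℕ → Γ, Even (sInf (E.col ''
      {q | ∀ n : ℕ, ∃ m, n ≤ m ∧ r (List.ofFn (fun j : Fin m => β j.1)).reverse = q}))


/-- The visibly pushdown alphabet `{c, r, a}` with `c` a call, `r` a return and `a` an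
internal action. -/
inductive CRA : Type
  | c | r | a

def kindCRA : CRA → VKind
  | CRA.c => VKind.call
  | CRA.r => VKind.ret
  | CRA.a => VKind.intern


namespace CnarnAux

open PDM

/-- The word `c^p a r^q`. -/
def Wd (p q : ℕ) : List CRA :=
  List.replicate p CRA.c ++ [CRA.a] ++ List.replicate q CRA.r

/-- The `k`-th letter of `c^p a r^…`. -/
def Lf (p k : ℕ) : CRA := if k < p then CRA.c else if k = p then CRA.a else CRA.r

lemma Wd_length (p q : ℕ) : (Wd p q).length = p + 1 + q := by simp [Wd]; omega

lemma Wd_getElem (p q k : ℕ) (h : k < (Wd p q).length) : (Wd p q)[k] = Lf p k := by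
  have hk : k < p + 1 + q := by rwa [Wd_length] at h
  unfold Lf
  simp only [Wd] at h ⊢
  rcases lt_trichotomy k p with hlt | heq | hgt
  · rw [List.getElem_append_left (by simp; omega),
      List.getElem_append_left (by simpa), List.getElem_replicate]
    simp [hlt]
  · rw [List.getElem_append_left (by simp; omega),
      List.getElem_append_right (by simp; omega)]
    simp [heq]
  · rw [List.getElem_append_right (by simp; omega), List.getElem_replicate]
    have h1 : ¬ k < p := by omega
    have h2 : ¬ k = p := by omega
    simp [h1, h2]

lemma Wd_ofFn (p q : ℕ) : Wd p q = List.ofFn (fun k : Fin (p + 1 + q) => Lf p k.1) := by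
  apply List.ext_getElem
  · simp [Wd_length]
  · intro k h1 h2
    rw [Wd_getElem p q k h1, List.getElem_ofFn]

variable {Q : Type} {M : PDM Q CRA Unit}

lemma no_eps (vis : M.Visibly kindCRA) {c c' : Conf Q Unit} (h : M.Step c none c') : False := by
  unfold PDM.Step at h
  rcases hc : c.2 with _ | ⟨t, rest⟩ <;> rw [hc] at h
  · rw [vis.1] at h; exact h
  · obtain ⟨γ', hγ, _⟩ := h; rw [vis.1] at hγ; exact hγ

/-- Determinism: unique successor state per letter and top. -/
lemma func (det : M.Deterministic) {q q1 q2 : Q} {a : CRA} {t : Option Unit}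
    {l1 l2 : List Unit} (h1 : (q1, l1) ∈ M.δ q (some a) t) (h2 : (q2, l2) ∈ M.δ q (some a) t) :
    q1 = q2 :=
  congrArg Prod.fst ((det q t).1 (some a) h1 h2)

lemma stepC (vis : M.Visibly kindCRA) {c c' : Conf Q Unit} (h : M.Step c (some CRA.c) c') :
    (∃ l, (c'.1, l) ∈ M.δ c.1 (some CRA.c) none) ∧ c'.2.length = c.2.length + 1 := by
  obtain ⟨mv, hmv⟩ := vis.2.1 c.1 CRA.c rfl
  unfold PDM.Step at h
  rcases hc : c.2 with _ | ⟨t, rest⟩ <;> rw [hc] at h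
  · rw [hmv none] at h
    obtain ⟨p, hp, hpe⟩ := h
    constructor
    · exact ⟨c'.2, by rw [hmv none]; exact ⟨p, hp, hpe⟩⟩
    · rw [← hpe]; simp [hc]
  · obtain ⟨γ', hγ, heq⟩ := h
    rw [hmv (some t)] at hγ
    obtain ⟨p, hp, hpe⟩ := hγ
    have h1 : p.1 = c'.1 := congrArg Prod.fst hpe
    have h2 : p.2 :: (some t).toList = γ' := congrArg Prod.snd hpe
    constructor
    · refine ⟨[p.2], ?_⟩
      rw [hmv none]
      refine ⟨p, hp, ?_⟩
      show (p.1, [p.2]) = (c'.1, [p.2])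
      rw [h1]
    · rw [heq, ← h2]; simp [hc]

lemma stepA (vis : M.Visibly kindCRA) {c c' : Conf Q Unit} (h : M.Step c (some CRA.a) c') :
    (∃ l, (c'.1, l) ∈ M.δ c.1 (some CRA.a) none) ∧ c'.2.length = c.2.length := by
  obtain ⟨mv, hmv⟩ := vis.2.2.2 c.1 CRA.a rfl
  unfold PDM.Step at h
  rcases hc : c.2 with _ | ⟨t, rest⟩ <;> rw [hc] at h
  · rw [hmv none] at h
    obtain ⟨p, hp, hpe⟩ := h
    constructor
    · exact ⟨c'.2, by rw [hmv none]; exact ⟨p, hp, hpe⟩⟩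
    · rw [← hpe]; simp [hc]
  · obtain ⟨γ', hγ, heq⟩ := h
    rw [hmv (some t)] at hγ
    obtain ⟨p, hp, hpe⟩ := hγ
    have h1 : p = c'.1 := congrArg Prod.fst hpe
    have h2 : (some t).toList = γ' := congrArg Prod.snd hpe
    constructor
    · refine ⟨[], ?_⟩
      rw [hmv none]
      refine ⟨p, hp, ?_⟩
      show (p, ([] : List Unit)) = (c'.1, [])
      rw [h1]
    · rw [heq, ← h2]; simp [hc]

lemma stepR (vis : M.Visibly kindCRA) {c c' : Conf Q Unit} (hne : c.2 ≠ [])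
    (h : M.Step c (some CRA.r) c') :
    (∃ l, (c'.1, l) ∈ M.δ c.1 (some CRA.r) (some ())) ∧ c'.2.length + 1 = c.2.length := by
  unfold PDM.Step at h
  rcases hc : c.2 with _ | ⟨t, rest⟩
  · exact absurd hc hne
  · rw [hc] at h
    obtain ⟨γ', hγ, heq⟩ := h
    have hγ0 : γ' = [] := vis.2.2.1 c.1 CRA.r (some t) rfl (c'.1, γ') hγ
    constructor
    · exact ⟨γ', hγ⟩
    · rw [heq, hγ0]; simp [hc]

lemma reduceOption_map_some {α : Type} (l : List α) : (l.map some).reduceOption = l := by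
  induction l with
  | nil => rfl
  | cons a l ih => simp [List.reduceOption_cons_of_some, ih]

/-- Extraction of the letters of a run of a realtime machine. -/
lemma run_letters (vis : M.Visibly kindCRA) {m : ℕ} {u : ℕ → Option CRA}
    {ρ : ℕ → Conf Q Unit} {p q : ℕ}
    (hstep : ∀ k < m, M.Step (ρ k) (u k) (ρ (k + 1)))
    (hred : (List.ofFn (fun k : Fin m => u k.1)).reduceOption = Wd p q) :
    m = p + 1 + q ∧ ∀ k < m, u k = some (Lf p k) := by
  set v : ℕ → CRA := fun k => (u k).getD CRA.a with hv
  have huv : ∀ k < m, u k = some (v k) := by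
    intro k hk
    cases hu : u k with
    | some a => simp [hv, hu]
    | none =>
      exfalso
      have h := hstep k hk
      rw [hu] at h
      exact no_eps vis h
  have hofn : (List.ofFn fun k : Fin m => u k.1) = (List.ofFn fun k : Fin m => v k.1).map some := by
    rw [List.map_ofFn]
    exact congrArg List.ofFn (funext fun k => huv k.1 k.2)
  rw [hofn, reduceOption_map_some] at hred
  have hm : m = p + 1 + q := by
    have := congrArg List.length hred
    simpa [Wd_length] using this
  refine ⟨hm, fun k hk => ?_⟩
  rw [huv k hk]
  have hlt : k < (List.ofFn fun k : Fin m => v k.1).length := by simpa using hk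
  have e1 : (List.ofFn fun k : Fin m => v k.1)[k]'hlt = v k := by rw [List.getElem_ofFn]
  have e2 : (List.ofFn fun k : Fin m => v k.1)[k]'hlt = (Wd p q)[k]'(hred ▸ hlt) :=
    List.getElem_of_eq hred hlt
  rw [Wd_getElem] at e2
  rw [← e1, e2]

end CnarnAux

deriving instance DecidableEq for CRA

namespace CnarnAux

lemma Wd_count (p q : ℕ) : (Wd p q).count CRA.c = p := by
  simp [Wd, List.count_append, List.count_replicate, List.count_singleton]

end CnarnAux


open CnarnAux

/-- The language `L = {cⁿ a r^(n-2) | n ≥ 2}` is not accepted by any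
deterministic visibly one-counter automaton. -/
theorem cnarn_not_visibly_one_counter :
    ¬ ∃ (Q : Type) (_ : Finite Q) (M : PDM Q CRA Unit) (F : Set Q),
        M.Deterministic ∧ M.Visibly kindCRA ∧
        {w : List CRA | PDM.AcceptsFin M F w} =
          {w : List CRA | ∃ n : ℕ, 2 ≤ n ∧
            w = List.replicate n CRA.c ++ [CRA.a] ++ List.replicate (n - 2) CRA.r} := by
  rintro ⟨Q, finQ, M, F, det, vis, hL⟩
  haveI := finQ
  have hLiff := Set.ext_iff.mp hL
  have hacc : ∀ t : ℕ, PDM.AcceptsFin M F (Wd (t + 2) t) := by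
    intro t
    exact (hLiff (Wd (t + 2) t)).mpr ⟨t + 2, by omega, by simp [Wd]⟩
  choose m ρ u h0 hstep hred hfin using hacc
  have hml : ∀ t, m t = (t + 2) + 1 + t ∧ ∀ k < m t, u t k = some (Lf (t + 2) k) :=
    fun t => run_letters vis (hstep t) (hred t)
  have hst : ∀ t k, k < (t + 2) + 1 + t → M.Step (ρ t k) (some (Lf (t + 2) k)) (ρ t (k + 1)) := by
    intro t k hk
    have hk' : k < m t := by rw [(hml t).1]; exact hk
    have h := hstep t k hk'
    rwa [(hml t).2 k hk'] at h
  have hstC : ∀ t k, k < t + 2 → M.Step (ρ t k) (some CRA.c) (ρ t (k + 1)) := by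
    intro t k hk
    have h := hst t k (by omega)
    rwa [show Lf (t + 2) k = CRA.c from if_pos hk] at h
  have hstA : ∀ t, M.Step (ρ t (t + 2)) (some CRA.a) (ρ t (t + 3)) := by
    intro t
    have h := hst t (t + 2) (by omega)
    rwa [show Lf (t + 2) (t + 2) = CRA.a from by unfold Lf; simp] at h
  have hstR : ∀ t k, t + 2 < k → k < (t + 2) + 1 + t →
      M.Step (ρ t k) (some CRA.r) (ρ t (k + 1)) := by
    intro t k h1 h2
    have h := hst t k h2
    rwa [show Lf (t + 2) k = CRA.r from by
      unfold Lf; rw [if_neg (by omega), if_neg (by omega)]] at h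
  have lenA : ∀ t k, k ≤ t + 2 → (ρ t k).2.length = k := by
    intro t k
    induction k with
    | zero => intro _; rw [h0 t]; rfl
    | succ k ih =>
      intro hk
      have h := stepC vis (hstC t k (by omega))
      rw [h.2, ih (by omega)]
  have lenB : ∀ t, (ρ t (t + 3)).2.length = t + 2 := by
    intro t
    have h := stepA vis (hstA t)
    rw [h.2, lenA t (t + 2) le_rfl]
  have lenC : ∀ t k, k ≤ t → (ρ t (t + 3 + k)).2.length = t + 2 - k := by
    intro t k
    induction k with
    | zero => intro _; simpa using lenB t
    | succ k ih =>
      intro hk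
      have hlen := ih (by omega)
      have hne : (ρ t (t + 3 + k)).2 ≠ [] := by
        intro h; rw [h] at hlen; simp at hlen; omega
      have h := stepR vis hne (hstR t (t + 3 + k) (by omega) (by omega))
      have h2 := h.2
      show (ρ t (t + 3 + k + 1)).2.length = t + 2 - (k + 1)
      omega
  have key : ∀ a b : ℕ, a < b → (ρ a (a + 2)).1 = (ρ b (b + 2)).1 → False := by
    intro a b hab hq
    have ha : (ρ a (a + 3)).1 = (ρ b (b + 3)).1 := by
      obtain ⟨l1, e1⟩ := (stepA vis (hstA a)).1
      obtain ⟨l2, e2⟩ := (stepA vis (hstA b)).1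
      rw [hq] at e1
      exact func det e1 e2
    have hr : ∀ k, k ≤ a → (ρ a (a + 3 + k)).1 = (ρ b (b + 3 + k)).1 := by
      intro k
      induction k with
      | zero => intro _; simpa using ha
      | succ k ih =>
        intro hk
        have ihk := ih (by omega)
        have hne1 : (ρ a (a + 3 + k)).2 ≠ [] := by
          have hl := lenC a k (by omega)
          intro h; rw [h] at hl; simp at hl; omega
        have hne2 : (ρ b (b + 3 + k)).2 ≠ [] := by
          have hl := lenC b k (by omega)
          intro h; rw [h] at hl; simp at hl; omega
        obtain ⟨l1, e1⟩ := (stepR vis hne1 (hstR a (a + 3 + k) (by omega) (by omega))).1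
        obtain ⟨l2, e2⟩ := (stepR vis hne2 (hstR b (b + 3 + k) (by omega) (by omega))).1
        rw [ihk] at e1
        show (ρ a (a + 3 + k + 1)).1 = (ρ b (b + 3 + k + 1)).1
        exact func det e1 e2
    have hfa : (ρ a (a + 3 + a)).1 ∈ F := by
      have h := hfin a
      have he : m a = a + 3 + a := by have := (hml a).1; omega
      rwa [he] at h
    have hfb : (ρ b (b + 3 + a)).1 ∈ F := by rw [← hr a le_rfl]; exact hfa
    have hacc2 : PDM.AcceptsFin M F (Wd (b + 2) a) := by
      refine ⟨(b + 2) + 1 + a, ρ b, fun k => some (Lf (b + 2) k), h0 b, ?_, ?_, ?_⟩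
      · intro k hk; exact hst b k (by omega)
      · rw [show (List.ofFn fun k : Fin ((b + 2) + 1 + a) => some (Lf (b + 2) k.1))
              = (List.ofFn fun k : Fin ((b + 2) + 1 + a) => Lf (b + 2) k.1).map some from by
            rw [List.map_ofFn]; rfl]
        rw [reduceOption_map_some, ← Wd_ofFn]
      · show (ρ b ((b + 2) + 1 + a)).1 ∈ F
        have he : (b + 2) + 1 + a = b + 3 + a := by omega
        rw [he]; exact hfb
    obtain ⟨n, hn2, hw⟩ := (hLiff (Wd (b + 2) a)).mp hacc2
    have hwd : Wd (b + 2) a = Wd n (n - 2) := hw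
    have hcnt := congrArg (List.count CRA.c) hwd
    rw [Wd_count, Wd_count] at hcnt
    have hlen := congrArg List.length hwd
    rw [Wd_length, Wd_length] at hlen
    omega
  obtain ⟨t1, t2, hne, hq⟩ := Finite.exists_ne_map_eq_of_infinite (fun t => (ρ t (t + 2)).1)
  rcases lt_or_gt_of_ne hne with h | h
  · exact key t1 t2 h hq
  · exact key t2 t1 h hq.symm
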